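/- For four points in ℝ³ ≅ Im ℍ with a,b,c,d affinely independent (unique circumsphere with center m), the imaginary part of the quaternionic cross-ratio cr(a,b,c,d) = (a-b)(b-c)⁻¹(c-d)(d-a)⁻¹ is parallel to m - a. -/

import Mathlib

open Quaternion

/-- Quaternionic cross-ratio. -/
noncomputable def crH (a b c d : ℍ[ℝ]) : ℍ[ℝ] := (a - b) * (b - c)⁻¹ * (c - d) * (d - a)⁻¹

theorem stmt14 (a b c d m : ℍ[ℝ]) (R : ℝ) (hR : 0 < R)
    (ha : a.re = 0) (hb : b.re = 0) (hc : c.re = 0) (hd : d.re = 0) (hm : m.re = 0)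
    (hab : a ≠ b) (hac : a ≠ c) (had : a ≠ d) (hbc : b ≠ c) (hbd : b ≠ d) (hcd : c ≠ d)
    (haff : ∀ α β γ δ : ℝ, α • a + β • b + γ • c + δ • d = 0 →
      α + β + γ + δ = 0 → α = 0 ∧ β = 0 ∧ γ = 0 ∧ δ = 0)
    (hma : ‖a - m‖ = R) (hmb : ‖b - m‖ = R) (hmc : ‖c - m‖ = R) (hmd : ‖d - m‖ = R) :
    let v := (crH a b c d).im
    let w := m - a
    v.imJ * w.imK - v.imK * w.imJ = 0 ∧
    v.imK * w.imI - v.imI * w.imK = 0 ∧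
    v.imI * w.imJ - v.imJ * w.imI = 0 := by
  intro v w
  -- star of a purely imaginary quaternion is its negation
  have hstar : ∀ q : ℍ[ℝ], q.re = 0 → star q = -q := by
    intro q h
    ext <;> simp [h]
  have hbc' : (b - c).re = 0 := by simp [Quaternion.re_sub, hb, hc]
  have hda' : (d - a).re = 0 := by simp [Quaternion.re_sub, hd, ha]
  -- crH is a nonnegative scalar multiple of P := (a-b)(b-c)(c-d)(d-a)
  have key : crH a b c d
      = ((normSq (b - c))⁻¹ * (normSq (d - a))⁻¹) •
        ((a - b) * (b - c) * (c - d) * (d - a)) := by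
    unfold crH
    rw [Quaternion.inv_def, Quaternion.inv_def, hstar _ hbc', hstar _ hda']
    simp only [smul_neg, mul_neg, neg_mul, neg_neg, Algebra.mul_smul_comm,
      Algebra.smul_mul_assoc, smul_smul]
    rw [mul_comm ((normSq (d - a))⁻¹) ((normSq (b - c))⁻¹)]
  set r : ℝ := (normSq (b - c))⁻¹ * (normSq (d - a))⁻¹ with hr
  set P : ℍ[ℝ] := (a - b) * (b - c) * (c - d) * (d - a) with hP
  have hvI : v.imI = r * P.imI := by
    simp [v, key, Quaternion.imI_im]
  have hvJ : v.imJ = r * P.imJ := by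
    simp [v, key, Quaternion.imJ_im]
  have hvK : v.imK = r * P.imK := by
    simp [v, key, Quaternion.imK_im]
  -- squared-distance hypotheses in coordinates
  have hsq : ∀ x : ℍ[ℝ], x.re = 0 → ‖x - m‖ = R →
      (x.imI - m.imI)^2 + (x.imJ - m.imJ)^2 + (x.imK - m.imK)^2 = R^2 := by
    intro x hx hxm
    have h1 : normSq (x - m) = R ^ 2 := by
      rw [Quaternion.normSq_eq_norm_mul_self, hxm]; ring
    rw [Quaternion.normSq_def'] at h1
    simp only [Quaternion.re_sub, Quaternion.imI_sub, Quaternion.imJ_sub,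
      Quaternion.imK_sub, hx, hm] at h1
    linarith [h1]
  have Ha := hsq a ha hma
  have Hb0 := hsq b hb hmb
  have Hc0 := hsq c hc hmc
  have Hd0 := hsq d hd hmd
  have Hb : (b.imI - m.imI)^2 + (b.imJ - m.imJ)^2 + (b.imK - m.imK)^2
      = (a.imI - m.imI)^2 + (a.imJ - m.imJ)^2 + (a.imK - m.imK)^2 := by
    rw [Hb0, Ha]
  have Hc : (c.imI - m.imI)^2 + (c.imJ - m.imJ)^2 + (c.imK - m.imK)^2
      = (a.imI - m.imI)^2 + (a.imJ - m.imJ)^2 + (a.imK - m.imK)^2 := by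
    rw [Hc0, Ha]
  have Hd : (d.imI - m.imI)^2 + (d.imJ - m.imJ)^2 + (d.imK - m.imK)^2
      = (a.imI - m.imI)^2 + (a.imJ - m.imJ)^2 + (a.imK - m.imK)^2 := by
    rw [Hd0, Ha]
  have hwI : w.imI = m.imI - a.imI := by simp [w]
  have hwJ : w.imJ = m.imJ - a.imJ := by simp [w]
  have hwK : w.imK = m.imK - a.imK := by simp [w]
  -- the cross product of Im P with w vanishes (polynomial identity mod sphere eqns)
  have hPJK : P.imJ * w.imK - P.imK * w.imJ = 0 ∧
      P.imK * w.imI - P.imI * w.imK = 0 ∧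
      P.imI * w.imJ - P.imJ * w.imI = 0 := by
    simp only [hP, hwI, hwJ, hwK, Quaternion.imI_mul, Quaternion.imJ_mul,
      Quaternion.imK_mul, Quaternion.re_mul, Quaternion.re_sub, Quaternion.imI_sub,
      Quaternion.imJ_sub, Quaternion.imK_sub, ha, hb, hc, hd]
    refine ⟨?_, ?_, ?_⟩
    · linear_combination (((1 : ℝ)*c.imK^2*d.imI + (1 : ℝ)*c.imJ^2*d.imI + (-1 : ℝ)*c.imI*d.imK^2 + (-1 : ℝ)*c.imI*d.imJ^2 + (-1 : ℝ)*c.imI*d.imI^2 + (1 : ℝ)*c.imI^2*d.imI + (-2 : ℝ)*a.imK*c.imK*d.imI + (2 : ℝ)*a.imK*c.imI*d.imK + (1 : ℝ)*a.imK^2*d.imI + (-1 : ℝ)*a.imK^2*c.imI + (-2 : ℝ)*a.imJ*c.imJ*d.imI + (2 : ℝ)*a.imJ*c.imI*d.imJ + (1 : ℝ)*a.imJ^2*d.imI + (-1 : ℝ)*a.imJ^2*c.imI + (1 : ℝ)*a.imI*d.imK^2 + (1 : ℝ)*a.imI*d.imJ^2 + (1 : ℝ)*a.imI*d.imI^2 +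 (-1 : ℝ)*a.imI*c.imK^2 + (-1 : ℝ)*a.imI*c.imJ^2 + (-1 : ℝ)*a.imI*c.imI^2 + (-2 : ℝ)*a.imI*a.imK*d.imK + (2 : ℝ)*a.imI*a.imK*c.imK + (-2 : ℝ)*a.imI*a.imJ*d.imJ + (2 : ℝ)*a.imI*a.imJ*c.imJ + (-1 : ℝ)*a.imI^2*d.imI + (1 : ℝ)*a.imI^2*c.imI)/2) * Hb + (((-1 : ℝ)*b.imK^2*d.imI + (-1 : ℝ)*b.imJ^2*d.imI + (1 : ℝ)*b.imI*d.imK^2 + (1 : ℝ)*b.imI*d.imJ^2 + (1 : ℝ)*b.imI*d.imI^2 + (-1 : ℝ)*b.imI^2*d.imI + (2 : ℝ)*a.imK*b.imK*d.imI + (-2 : ℝ)*a.imK*b.imI*d.imK + (-1 : ℝ)*a.imK^2*d.imI + (1 : ℝ)*a.imK^2*b.imI + (2 : ℝ)*a.imJ*b.imJ*d.imI + (-2 : ℝ)*a.imJ*b.imI*d.imJ + (-1 : ℝ)*a.imJ^2*d.imI + (1 : ℝ)*a.imJ^2*b.imI + (-1 : ℝ)*a.imI*d.imK^2 + (-1 :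 ℝ)*a.imI*d.imJ^2 + (-1 : ℝ)*a.imI*d.imI^2 + (1 : ℝ)*a.imI*b.imK^2 + (1 : ℝ)*a.imI*b.imJ^2 + (1 : ℝ)*a.imI*b.imI^2 + (2 : ℝ)*a.imI*a.imK*d.imK + (-2 : ℝ)*a.imI*a.imK*b.imK + (2 : ℝ)*a.imI*a.imJ*d.imJ + (-2 : ℝ)*a.imI*a.imJ*b.imJ + (1 : ℝ)*a.imI^2*d.imI + (-1 : ℝ)*a.imI^2*b.imI)/2) * Hc + (((1 : ℝ)*b.imK^2*c.imI + (1 : ℝ)*b.imJ^2*c.imI + (-1 : ℝ)*b.imI*c.imK^2 + (-1 : ℝ)*b.imI*c.imJ^2 + (-1 : ℝ)*b.imI*c.imI^2 + (1 : ℝ)*b.imI^2*c.imI + (-2 : ℝ)*a.imK*b.imK*c.imI + (2 : ℝ)*a.imK*b.imI*c.imK + (1 : ℝ)*a.imK^2*c.imI + (-1 : ℝ)*a.imK^2*b.imI + (-2 : ℝ)*a.imJ*b.imJ*c.imI + (2 : ℝ)*a.imJ*b.imI*c.imJ + (1 : ℝ)*a.imJ^2*c.imI + (-1 : ℝ)*a.imJ^2*b.imI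 + (1 : ℝ)*a.imI*c.imK^2 + (1 : ℝ)*a.imI*c.imJ^2 + (1 : ℝ)*a.imI*c.imI^2 + (-1 : ℝ)*a.imI*b.imK^2 + (-1 : ℝ)*a.imI*b.imJ^2 + (-1 : ℝ)*a.imI*b.imI^2 + (-2 : ℝ)*a.imI*a.imK*c.imK + (2 : ℝ)*a.imI*a.imK*b.imK + (-2 : ℝ)*a.imI*a.imJ*c.imJ + (2 : ℝ)*a.imI*a.imJ*b.imJ + (-1 : ℝ)*a.imI^2*c.imI + (1 : ℝ)*a.imI^2*b.imI)/2) * Hd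
    · linear_combination (((1 : ℝ)*c.imK^2*d.imJ + (-1 : ℝ)*c.imJ*d.imK^2 + (-1 : ℝ)*c.imJ*d.imJ^2 + (-1 : ℝ)*c.imJ*d.imI^2 + (1 : ℝ)*c.imJ^2*d.imJ + (1 : ℝ)*c.imI^2*d.imJ + (-2 : ℝ)*a.imK*c.imK*d.imJ + (2 : ℝ)*a.imK*c.imJ*d.imK + (1 : ℝ)*a.imK^2*d.imJ + (-1 : ℝ)*a.imK^2*c.imJ + (1 : ℝ)*a.imJ*d.imK^2 + (1 : ℝ)*a.imJ*d.imJ^2 + (1 : ℝ)*a.imJ*d.imI^2 + (-1 : ℝ)*a.imJ*c.imK^2 + (-1 : ℝ)*a.imJ*c.imJ^2 + (-1 : ℝ)*a.imJ*c.imI^2 + (-2 : ℝ)*a.imJ*a.imK*d.imK + (2 : ℝ)*a.imJ*a.imK*c.imK + (-1 : ℝ)*a.imJ^2*d.imJ + (1 : ℝ)*a.imJ^2*c.imJ + (2 : ℝ)*a.imI*c.imJ*d.imI + (-2 : ℝ)*a.imI*c.imI*d.imJ + (-2 : ℝ)*a.imI*a.imJ*d.imI + (2 : ℝ)*a.imI*a.imJ*c.imI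 + (1 : ℝ)*a.imI^2*d.imJ + (-1 : ℝ)*a.imI^2*c.imJ)/2) * Hb + (((-1 : ℝ)*b.imK^2*d.imJ + (1 : ℝ)*b.imJ*d.imK^2 + (1 : ℝ)*b.imJ*d.imJ^2 + (1 : ℝ)*b.imJ*d.imI^2 + (-1 : ℝ)*b.imJ^2*d.imJ + (-1 : ℝ)*b.imI^2*d.imJ + (2 : ℝ)*a.imK*b.imK*d.imJ + (-2 : ℝ)*a.imK*b.imJ*d.imK + (-1 : ℝ)*a.imK^2*d.imJ + (1 : ℝ)*a.imK^2*b.imJ + (-1 : ℝ)*a.imJ*d.imK^2 + (-1 : ℝ)*a.imJ*d.imJ^2 + (-1 : ℝ)*a.imJ*d.imI^2 + (1 : ℝ)*a.imJ*b.imK^2 + (1 : ℝ)*a.imJ*b.imJ^2 + (1 : ℝ)*a.imJ*b.imI^2 + (2 : ℝ)*a.imJ*a.imK*d.imK + (-2 : ℝ)*a.imJ*a.imK*b.imK + (1 : ℝ)*a.imJ^2*d.imJ + (-1 : ℝ)*a.imJ^2*b.imJ + (-2 : ℝ)*a.imI*b.imJ*d.imI + (2 : ℝ)*a.imI*b.imI*d.imJ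 + (2 : ℝ)*a.imI*a.imJ*d.imI + (-2 : ℝ)*a.imI*a.imJ*b.imI + (-1 : ℝ)*a.imI^2*d.imJ + (1 : ℝ)*a.imI^2*b.imJ)/2) * Hc + (((1 : ℝ)*b.imK^2*c.imJ + (-1 : ℝ)*b.imJ*c.imK^2 + (-1 : ℝ)*b.imJ*c.imJ^2 + (-1 : ℝ)*b.imJ*c.imI^2 + (1 : ℝ)*b.imJ^2*c.imJ + (1 : ℝ)*b.imI^2*c.imJ + (-2 : ℝ)*a.imK*b.imK*c.imJ + (2 : ℝ)*a.imK*b.imJ*c.imK + (1 : ℝ)*a.imK^2*c.imJ + (-1 : ℝ)*a.imK^2*b.imJ + (1 : ℝ)*a.imJ*c.imK^2 + (1 : ℝ)*a.imJ*c.imJ^2 + (1 : ℝ)*a.imJ*c.imI^2 + (-1 : ℝ)*a.imJ*b.imK^2 + (-1 : ℝ)*a.imJ*b.imJ^2 + (-1 : ℝ)*a.imJ*b.imI^2 + (-2 : ℝ)*a.imJ*a.imK*c.imK + (2 : ℝ)*a.imJ*a.imK*b.imK + (-1 : ℝ)*a.imJ^2*c.imJ + (1 : ℝ)*a.imJ^2*b.imJ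 + (2 : ℝ)*a.imI*b.imJ*c.imI + (-2 : ℝ)*a.imI*b.imI*c.imJ + (-2 : ℝ)*a.imI*a.imJ*c.imI + (2 : ℝ)*a.imI*a.imJ*b.imI + (1 : ℝ)*a.imI^2*c.imJ + (-1 : ℝ)*a.imI^2*b.imJ)/2) * Hd
    · linear_combination (((-1 : ℝ)*c.imK*d.imK^2 + (-1 : ℝ)*c.imK*d.imJ^2 + (-1 : ℝ)*c.imK*d.imI^2 + (1 : ℝ)*c.imK^2*d.imK + (1 : ℝ)*c.imJ^2*d.imK + (1 : ℝ)*c.imI^2*d.imK + (1 : ℝ)*a.imK*d.imK^2 + (1 : ℝ)*a.imK*d.imJ^2 + (1 : ℝ)*a.imK*d.imI^2 + (-1 : ℝ)*a.imK*c.imK^2 + (-1 : ℝ)*a.imK*c.imJ^2 + (-1 : ℝ)*a.imK*c.imI^2 + (-1 : ℝ)*a.imK^2*d.imK + (1 : ℝ)*a.imK^2*c.imK + (2 : ℝ)*a.imJ*c.imK*d.imJ + (-2 : ℝ)*a.imJ*c.imJ*d.imK + (-2 : ℝ)*a.imJ*a.imK*d.imJ + (2 : ℝ)*a.imJ*a.imK*c.imJ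 + (1 : ℝ)*a.imJ^2*d.imK + (-1 : ℝ)*a.imJ^2*c.imK + (2 : ℝ)*a.imI*c.imK*d.imI + (-2 : ℝ)*a.imI*c.imI*d.imK + (-2 : ℝ)*a.imI*a.imK*d.imI + (2 : ℝ)*a.imI*a.imK*c.imI + (1 : ℝ)*a.imI^2*d.imK + (-1 : ℝ)*a.imI^2*c.imK)/2) * Hb + (((1 : ℝ)*b.imK*d.imK^2 + (1 : ℝ)*b.imK*d.imJ^2 + (1 : ℝ)*b.imK*d.imI^2 + (-1 : ℝ)*b.imK^2*d.imK + (-1 : ℝ)*b.imJ^2*d.imK + (-1 : ℝ)*b.imI^2*d.imK + (-1 : ℝ)*a.imK*d.imK^2 + (-1 : ℝ)*a.imK*d.imJ^2 + (-1 : ℝ)*a.imK*d.imI^2 + (1 : ℝ)*a.imK*b.imK^2 + (1 : ℝ)*a.imK*b.imJ^2 + (1 : ℝ)*a.imK*b.imI^2 + (1 : ℝ)*a.imK^2*d.imK + (-1 : ℝ)*a.imK^2*b.imK + (-2 : ℝ)*a.imJ*b.imK*d.imJ + (2 : ℝ)*a.imJ*b.imJ*d.imK + (2 : ℝ)*a.imJ*a.imK*d.imJ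 + (-2 : ℝ)*a.imJ*a.imK*b.imJ + (-1 : ℝ)*a.imJ^2*d.imK + (1 : ℝ)*a.imJ^2*b.imK + (-2 : ℝ)*a.imI*b.imK*d.imI + (2 : ℝ)*a.imI*b.imI*d.imK + (2 : ℝ)*a.imI*a.imK*d.imI + (-2 : ℝ)*a.imI*a.imK*b.imI + (-1 : ℝ)*a.imI^2*d.imK + (1 : ℝ)*a.imI^2*b.imK)/2) * Hc + (((-1 : ℝ)*b.imK*c.imK^2 + (-1 : ℝ)*b.imK*c.imJ^2 + (-1 : ℝ)*b.imK*c.imI^2 + (1 : ℝ)*b.imK^2*c.imK + (1 : ℝ)*b.imJ^2*c.imK + (1 : ℝ)*b.imI^2*c.imK + (1 : ℝ)*a.imK*c.imK^2 + (1 : ℝ)*a.imK*c.imJ^2 + (1 : ℝ)*a.imK*c.imI^2 + (-1 : ℝ)*a.imK*b.imK^2 + (-1 : ℝ)*a.imK*b.imJ^2 + (-1 : ℝ)*a.imK*b.imI^2 + (-1 : ℝ)*a.imK^2*c.imK + (1 : ℝ)*a.imK^2*b.imK + (2 : ℝ)*a.imJ*b.imK*c.imJ + (-2 : ℝ)*a.imJ*b.imJ*c.imK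 + (-2 : ℝ)*a.imJ*a.imK*c.imJ + (2 : ℝ)*a.imJ*a.imK*b.imJ + (1 : ℝ)*a.imJ^2*c.imK + (-1 : ℝ)*a.imJ^2*b.imK + (2 : ℝ)*a.imI*b.imK*c.imI + (-2 : ℝ)*a.imI*b.imI*c.imK + (-2 : ℝ)*a.imI*a.imK*c.imI + (2 : ℝ)*a.imI*a.imK*b.imI + (1 : ℝ)*a.imI^2*c.imK + (-1 : ℝ)*a.imI^2*b.imK)/2) * Hd
  refine ⟨?_, ?_, ?_⟩
  · rw [hvJ, hvK]; linear_combination r * hPJK.1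
  · rw [hvK, hvI]; linear_combination r * hPJK.2.1
  · rw [hvI, hvJ]; linear_combination r * hPJK.2.2
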